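/- For all integers t ≥ 1 and k ≥ 1, the following identity holds in ℚ: C(k+t−1, 2t) + ∑_{s=1}^{t} (−1)^{s−1} · C(2s−1, s) / ( (2s−1) · 2^{4s−1} ) · C(k+t−s−1, 2t−2s) = (k − 1/2) · (k − t + 1/2)_{2t−1} / (2t)!. -/

import Mathlib

open Finset

/-- Shifted factorial (Pochhammer) `(a)_n = a(a+1)⋯(a+n-1)`. -/
def poch (a : ℚ) (n : ℕ) : ℚ := ∏ k ∈ Finset.range n, (a + k)

lemma poch_succ (a : ℚ) (n : ℕ) : poch a (n+1) = poch a n * (a + n) := by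
  simp [poch, Finset.prod_range_succ]

lemma poch_succ' (a : ℚ) (n : ℕ) : poch a (n+1) = a * poch (a+1) n := by
  rw [poch, Finset.prod_range_succ']
  have h : (∏ x ∈ Finset.range n, (a + ((x:ℕ)+1 : ℕ))) = poch (a+1) n := by
    apply Finset.prod_congr rfl
    intro i _
    push_cast
    ring
  rw [h]
  push_cast
  ring

/-- Coefficients of the sum. -/
def cc : ℕ → ℚ
  | 0 => 1
  | s+1 => (-1)^s * ((2*s+1).choose (s+1) : ℚ) / (((2*s+1 : ℕ) : ℚ) * 2^(4*s+3))

lemma choose_rec (n : ℕ) : (n+2) * (2*n+3).choose (n+2) = 2*(2*n+3) * ((2*n+1).choose (n+1)) := by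
  have h1 : (2*n+3) * (2*n+2).choose (n+1) = (2*n+3).choose (n+2) * (n+2) := by
    have := Nat.add_one_mul_choose_eq (2*n+2) (n+1)
    have e1 : Nat.succ (2*n+2) = 2*n+3 := rfl
    have e2 : Nat.succ (n+1) = n+2 := rfl
    rw [show 2*n+2+1 = 2*n+3 from rfl, show n+1+1 = n+2 from rfl] at this
    exact this
  have h2 : (2*n+2).choose (n+1) = 2 * (2*n+1).choose (n+1) := by
    have hsymm : (2*n+1).choose n = (2*n+1).choose (n+1) := by
      have h := Nat.choose_symm (n := 2*n+1) (k := n+1) (by omega)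
      have he : 2*n+1 - (n+1) = n := by omega
      rw [he] at h
      exact h
    have h3 := Nat.choose_succ_succ (2*n+1) n
    simp only [Nat.succ_eq_add_one] at h3
    have e3 : 2*n+1+1 = 2*n+2 := by omega
    rw [e3] at h3
    omega
  nlinarith [h1, h2]

lemma hc (n : ℕ) : cc (n+1) = (1/2) * poch (1/2 - n) (2*n+1) / ((2*n+2).factorial : ℚ) := by
  induction n with
  | zero =>
    show ((-1:ℚ))^0 * ((2*0+1).choose (0+1) : ℚ) / (((2*0+1:ℕ):ℚ) * 2^(4*0+3)) = _
    norm_num [poch, Nat.factorial]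
  | succ m ih =>
    have key : ((m:ℚ)+2) * (((2*m+3).choose (m+2) : ℕ) : ℚ)
        = 2*(2*(m:ℚ)+3) * (((2*m+1).choose (m+1) : ℕ) : ℚ) := by
      exact_mod_cast congrArg (Nat.cast (R := ℚ)) (choose_rec m)
    -- rewrite the Pochhammer on the RHS
    have e0 : (1:ℚ)/2 - ((m+1 : ℕ) : ℚ) = (1/2 - (m:ℚ)) - 1 := by push_cast; ring
    have e1 : 2*(m+1)+1 = (2*m+2)+1 := by ring
    have hpoch : poch ((1:ℚ)/2 - ((m+1 : ℕ) : ℚ)) (2*(m+1)+1)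
        = ((1/2 - (m:ℚ)) - 1) * (poch (1/2 - (m:ℚ)) (2*m+1) * ((1/2 - (m:ℚ)) + (2*m+1 : ℕ))) := by
      rw [e0, e1, poch_succ']
      congr 1
      have e2 : (1:ℚ)/2 - (m:ℚ) - 1 + 1 = 1/2 - (m:ℚ) := by ring
      rw [e2, show 2*m+2 = (2*m+1)+1 from by omega, poch_succ]
    rw [hpoch]
    have hP : poch (1/2 - (m:ℚ)) (2*m+1) = 2 * cc (m+1) * ((2*m+2).factorial : ℚ) := by
      rw [ih]; field_simp
    rw [hP]
    have hf : ((2*(m+1)+2).factorial : ℚ) = (2*(m:ℚ)+4) * ((2*(m:ℚ)+3) * ((2*m+2).factorial : ℚ)) := by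
      rw [show 2*(m+1)+2 = (2*m+3)+1 from by omega, Nat.factorial_succ,
        show 2*m+3 = (2*m+2)+1 from by omega, Nat.factorial_succ]
      push_cast
      ring
    rw [hf]
    show ((-1:ℚ))^(m+1) * ((2*(m+1)+1).choose (m+1+1) : ℚ) / (((2*(m+1)+1:ℕ):ℚ) * 2^(4*(m+1)+3)) = _
    rw [show 2*(m+1)+1 = 2*m+3 from by omega, show m+1+1 = m+2 from rfl,
      show 4*(m+1)+3 = (4*m+3)+4 from by omega]
    simp only [cc]
    have hX : (0:ℚ) < (((2*m+1).choose (m+1) : ℕ) : ℚ) := by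
      have : 0 < (2*m+1).choose (m+1) := Nat.choose_pos (by omega)
      exact_mod_cast this
    have hY : (((2*m+3).choose (m+2) : ℕ) : ℚ) = 2*(2*(m:ℚ)+3) * (((2*m+1).choose (m+1) : ℕ) : ℚ) / ((m:ℚ)+2) := by
      field_simp
      linarith [key]
    rw [hY]
    have hfne : ((2*m+2).factorial : ℚ) ≠ 0 := by exact_mod_cast Nat.factorial_ne_zero _
    have hm1 : ((2*m+3 : ℕ) : ℚ) = 2*(m:ℚ)+3 := by push_cast; ring
    have hm2 : ((2*m+1 : ℕ) : ℚ) = 2*(m:ℚ)+1 := by push_cast; ring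
    rw [hm1, hm2, pow_add, pow_succ]
    push_cast
    field_simp
    ring

def LA (t' k' : ℕ) : ℚ := ∑ j ∈ Finset.range (t'+2), cc (t'+1-j) * ((k'+j).choose (2*j) : ℚ)
def RA (t' k' : ℕ) : ℚ := ((k':ℚ)+1/2) * poch ((k':ℚ)+1/2-(t':ℚ)) (2*t'+1) / ((2*t'+2).factorial : ℚ)
def LB (t' k' : ℕ) : ℚ := ∑ j ∈ Finset.range (t'+1), cc (t'-j) * ((k'+j+1).choose (2*j+1) : ℚ)
def RB (t' k' : ℕ) : ℚ := ((k':ℚ)+1) * poch ((k':ℚ)+3/2-(t':ℚ)) (2*t') / ((2*t'+1).factorial : ℚ)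

lemma LA_step (t' k' : ℕ) : LA t' (k'+1) = LA t' k' + LB t' k' := by
  unfold LA LB
  rw [Finset.sum_range_succ' (fun j => cc (t'+1-j) * (((k'+1)+j).choose (2*j) : ℚ)) (t'+1),
      Finset.sum_range_succ' (fun j => cc (t'+1-j) * ((k'+j).choose (2*j) : ℚ)) (t'+1)]
  have key : ∀ i ∈ Finset.range (t'+1),
      cc (t'+1-(i+1)) * (((k'+1)+(i+1)).choose (2*(i+1)) : ℚ)
      = cc (t'+1-(i+1)) * ((k'+(i+1)).choose (2*(i+1)) : ℚ)
        + cc (t'-i) * ((k'+i+1).choose (2*i+1) : ℚ) := by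
    intro i _
    have e1 : t'+1-(i+1) = t'-i := by omega
    have e2 : (k'+1)+(i+1) = (k'+i+1)+1 := by omega
    have e3 : 2*(i+1) = (2*i+1)+1 := by omega
    have e4 : k'+(i+1) = k'+i+1 := by omega
    rw [e1, e2, e3, e4, Nat.choose_succ_succ]
    push_cast
    ring
  rw [Finset.sum_congr rfl key, Finset.sum_add_distrib]
  simp only [Nat.mul_zero, Nat.choose_zero_right, Nat.cast_one, mul_one]
  ring

lemma RA_step (t' k' : ℕ) : RA t' (k'+1) = RA t' k' + RB t' k' := by
  unfold RA RB
  have hx : ((k'+1 : ℕ) : ℚ) = (k':ℚ)+1 := by push_cast; ring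
  rw [hx]
  have e1 : ((k':ℚ)+1)+1/2-(t':ℚ) = ((k':ℚ)+3/2-(t':ℚ)) := by ring
  rw [e1, poch_succ]
  have e2 : (k':ℚ)+1/2-(t':ℚ) = ((k':ℚ)+3/2-(t':ℚ)) - 1 := by ring
  rw [e2, poch_succ']
  have e3 : (k':ℚ)+3/2-(t':ℚ) - 1 + 1 = (k':ℚ)+3/2-(t':ℚ) := by ring
  rw [e3]
  have hf : ((2*t'+2).factorial : ℚ) = (2*(t':ℚ)+2) * ((2*t'+1).factorial : ℚ) := by
    rw [show 2*t'+2 = (2*t'+1)+1 from by omega, Nat.factorial_succ]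
    push_cast; ring
  rw [hf]
  have hfne : ((2*t'+1).factorial : ℚ) ≠ 0 := by exact_mod_cast Nat.factorial_ne_zero _
  have h2 : ((2*t' : ℕ) : ℚ) = 2*(t':ℚ) := by push_cast; ring
  rw [h2]
  field_simp
  ring

lemma LB_step (t'' k' : ℕ) : LB (t''+1) (k'+1) = LB (t''+1) k' + LA t'' (k'+1) := by
  unfold LA LB
  rw [← Finset.sum_add_distrib]
  apply Finset.sum_congr rfl
  intro j _
  have e1 : (k'+1)+j+1 = (k'+j+1)+1 := by omega
  have e2 : 2*j+1 = (2*j)+1 := rfl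
  have e3 : t''+1-j = t''+1-j := rfl
  rw [e1, Nat.choose_succ_succ]
  have e4 : (k'+1)+j = k'+j+1 := by omega
  rw [e4]
  push_cast
  ring

lemma RB_step (t'' k' : ℕ) : RB (t''+1) (k'+1) = RB (t''+1) k' + RA t'' (k'+1) := by
  unfold RA RB
  have hx : ((k'+1 : ℕ) : ℚ) = (k':ℚ)+1 := by push_cast; ring
  have ht : ((t''+1 : ℕ) : ℚ) = (t'':ℚ)+1 := by push_cast; ring
  rw [hx, ht]
  have e0 : 2*(t''+1) = (2*t''+1)+1 := by omega
  rw [e0]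
  have eL : (k':ℚ)+1+3/2-((t'':ℚ)+1) = (k':ℚ)+3/2-(t'':ℚ) := by ring
  rw [eL]
  have eM : (k':ℚ)+3/2-((t'':ℚ)+1) = ((k':ℚ)+3/2-(t'':ℚ)) - 1 := by ring
  rw [eM]
  have eN : (k':ℚ)+1+1/2-(t'':ℚ) = (k':ℚ)+3/2-(t'':ℚ) := by ring
  rw [eN]
  rw [poch_succ]
  have pm : poch ((k':ℚ)+3/2-(t'':ℚ) - 1) (2*t''+1+1)
      = (((k':ℚ)+3/2-(t'':ℚ)) - 1) * poch ((k':ℚ)+3/2-(t'':ℚ)) (2*t''+1) := by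
    rw [poch_succ', show (k':ℚ)+3/2-(t'':ℚ) - 1 + 1 = (k':ℚ)+3/2-(t'':ℚ) from by ring]
  rw [pm]
  have hf : ((2*t''+1+1+1).factorial : ℚ) = (2*(t'':ℚ)+3) * ((2*t''+2).factorial : ℚ) := by
    rw [show 2*t''+1+1+1 = (2*t''+2)+1 from by omega, Nat.factorial_succ]
    push_cast; ring
  rw [hf]
  have hfne : ((2*t''+2).factorial : ℚ) ≠ 0 := by exact_mod_cast Nat.factorial_ne_zero _
  have h2 : ((2*t''+1 : ℕ) : ℚ) = 2*(t'':ℚ)+1 := by push_cast; ring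
  rw [h2]
  field_simp
  ring

lemma LA_base (t' : ℕ) : LA t' 0 = cc (t'+1) := by
  unfold LA
  rw [Finset.sum_eq_single 0]
  · norm_num
  · intro j _ hj
    have : (0+j).choose (2*j) = 0 := by
      apply Nat.choose_eq_zero_of_lt
      omega
    rw [this]
    norm_num
  · intro h
    simp at h

lemma RA_base (t' : ℕ) : RA t' 0 = cc (t'+1) := by
  unfold RA
  rw [hc t']
  norm_num

lemma LB_base (t' : ℕ) : LB t' 0 = cc t' := by
  unfold LB
  rw [Finset.sum_eq_single 0]
  · norm_num
  · intro j _ hj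
    have : (0+j+1).choose (2*j+1) = 0 := by
      apply Nat.choose_eq_zero_of_lt
      omega
    rw [this]
    norm_num
  · intro h
    simp at h

lemma RB_base (t' : ℕ) : RB t' 0 = cc t' := by
  unfold RB
  match t' with
  | 0 => norm_num [poch, Nat.factorial, cc]
  | n+1 =>
    have ht : ((n+1 : ℕ) : ℚ) = (n:ℚ)+1 := by push_cast; ring
    have h0 : ((0:ℕ) : ℚ) = 0 := by norm_num
    rw [ht, h0]
    have e1 : (0:ℚ)+3/2-((n:ℚ)+1) = 1/2 - (n:ℚ) := by push_cast; ring
    rw [e1]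
    have e0 : 2*(n+1) = (2*n+1)+1 := by omega
    rw [e0, poch_succ]
    have hP : poch (1/2 - (n:ℚ)) (2*n+1) = 2 * cc (n+1) * ((2*n+2).factorial : ℚ) := by
      rw [hc n]; field_simp
    rw [hP]
    have hf : ((2*n+1+1+1).factorial : ℚ) = (2*(n:ℚ)+3) * ((2*n+2).factorial : ℚ) := by
      rw [show 2*n+1+1+1 = (2*n+2)+1 from by omega, Nat.factorial_succ]
      push_cast; ring
    rw [hf]
    have hfne : ((2*n+2).factorial : ℚ) ≠ 0 := by exact_mod_cast Nat.factorial_ne_zero _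
    have h2 : ((2*n+1 : ℕ) : ℚ) = 2*(n:ℚ)+1 := by push_cast; ring
    rw [h2]
    field_simp
    ring

lemma main_AB (k' : ℕ) : (∀ t', LA t' k' = RA t' k') ∧ (∀ t', LB t' k' = RB t' k') := by
  induction k' with
  | zero =>
    exact ⟨fun t' => by rw [LA_base, RA_base], fun t' => by rw [LB_base, RB_base]⟩
  | succ k' ih =>
    have hA : ∀ t', LA t' (k'+1) = RA t' (k'+1) := fun t' => by
      rw [LA_step, RA_step, ih.1 t', ih.2 t']
    refine ⟨hA, fun t' => ?_⟩
    match t' with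
    | 0 =>
      unfold LB RB
      norm_num [poch, Nat.factorial, cc]
    | t''+1 =>
      rw [LB_step, RB_step, ih.2 (t''+1), hA t'']

theorem stmt6 (t k : ℕ) (ht : 1 ≤ t) (hk : 1 ≤ k) :
    (Nat.choose (k + t - 1) (2 * t) : ℚ) +
      ∑ s ∈ Finset.Icc 1 t,
        (-1 : ℚ) ^ (s - 1) * (Nat.choose (2 * s - 1) s : ℚ) /
            (((2 * s - 1 : ℕ) : ℚ) * 2 ^ (4 * s - 1)) *
          (Nat.choose (k + t - s - 1) (2 * t - 2 * s) : ℚ)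
    = ((k : ℚ) - 1/2) * poch ((k : ℚ) - t + 1/2) (2 * t - 1) /
        (Nat.factorial (2 * t) : ℚ) := by
  obtain ⟨t', rfl⟩ : ∃ t', t = t'+1 := ⟨t-1, by omega⟩
  obtain ⟨k', rfl⟩ : ∃ k', k = k'+1 := ⟨k-1, by omega⟩
  have hmain := (main_AB k').1 t'
  have hsum : (∑ s ∈ Finset.Icc 1 (t'+1),
      (-1 : ℚ) ^ (s - 1) * (Nat.choose (2*s-1) s : ℚ) /
          (((2*s-1 : ℕ) : ℚ) * 2 ^ (4*s-1)) *
        (Nat.choose ((k'+1) + (t'+1) - s - 1) (2*(t'+1) - 2*s) : ℚ))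
      = ∑ j ∈ Finset.range (t'+1), cc (t'+1-j) * (((k'+j).choose (2*j)) : ℚ) := by
    rw [← Finset.Ico_add_one_right_eq_Icc, Finset.sum_Ico_eq_sum_range]
    rw [show t'+1+1-1 = t'+1 from by omega]
    rw [← Finset.sum_range_reflect]
    apply Finset.sum_congr rfl
    intro j hj
    simp only [Finset.mem_range] at hj
    rw [show t'+1-1-j = t'-j from by omega]
    have e1 : 1+(t'-j) - 1 = t'-j := by omega
    have e2 : 2*(1+(t'-j)) - 1 = 2*(t'-j)+1 := by omega
    have e3 : 4*(1+(t'-j)) - 1 = 4*(t'-j)+3 := by omega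
    have e4 : k'+1+(t'+1)-(1+(t'-j))-1 = k'+j := by omega
    have e5 : 2*(t'+1)-2*(1+(t'-j)) = 2*j := by omega
    have e6 : 1+(t'-j) = (t'-j)+1 := by omega
    rw [e1, e2, e3, e4, e5, e6]
    rw [show t'+1-j = (t'-j)+1 from by omega]
    simp only [cc]
  rw [hsum]
  have hLA : (((k'+1+(t'+1)-1).choose (2*(t'+1))) : ℚ)
      + ∑ j ∈ Finset.range (t'+1), cc (t'+1-j) * (((k'+j).choose (2*j)) : ℚ)
      = LA t' k' := by
    unfold LA
    conv_rhs => rw [Finset.sum_range_succ]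
    rw [show t'+1-(t'+1) = 0 from by omega, show k'+(t'+1) = k'+1+(t'+1)-1 from by omega]
    simp only [cc]
    ring
  rw [hLA, hmain]
  unfold RA
  rw [show 2*(t'+1)-1 = 2*t'+1 from by omega]
  rw [show 2*(t'+1) = 2*t'+2 from by omega]
  rw [show ((k'+1:ℕ):ℚ) - 1/2 = (k':ℚ)+1/2 from by push_cast; ring]
  rw [show ((k'+1:ℕ):ℚ) - ((t'+1:ℕ):ℚ) + 1/2 = (k':ℚ)+1/2-(t':ℚ) from by push_cast; ring]
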